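/- In a coordination game with bonuses on a simple directed cycle with n nodes, every Nash equilibrium is a k-equilibrium for every k ∈ {1, ..., n−1}; that is, no coalition of at most n−1 players has a profitable deviation from a Nash equilibrium. -/

import Mathlib

open Finset

/-- Payoff in a coordination game with bonuses on the simple directed cycle
`1 → 2 → ⋯ → n → 1` (nodes modelled as `Fin n`, with `i - 1` the predecessor
of `i` on the cycle): the bonus of `i` for its colour, plus `1` if `i` chose
the same colour as its predecessor. -/
def cycPayoff {n : ℕ} [NeZero n] {C : Type} [DecidableEq C]
    (β : Fin n → C → ℕ) (s : Fin n → C) (i : Fin n) : ℕ :=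
  β i (s i) + (if s (i - 1) = s i then 1 else 0)

/-- A colouring is valid if every node chooses a colour available to it. -/
def Valid {n : ℕ} {C : Type} (A : Fin n → Finset C) (s : Fin n → C) : Prop :=
  ∀ i, s i ∈ A i

/-- `s'` is a profitable deviation (of the non-empty coalition on which `s`
and `s'` differ) from `s`: every deviating player strictly improves. -/
def ProfDev {n : ℕ} {C : Type} (p : (Fin n → C) → Fin n → ℕ)
    (s s' : Fin n → C) : Prop :=
  s ≠ s' ∧ ∀ i, s i ≠ s' i → p s i < p s' i

/-- A strong equilibrium: no coalition has a profitable deviation. -/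
def StrongEq {n : ℕ} {C : Type} (A : Fin n → Finset C)
    (p : (Fin n → C) → Fin n → ℕ) (s : Fin n → C) : Prop :=
  ∀ s', Valid A s' → ¬ ProfDev p s s'

/-- A Nash equilibrium: no single player can strictly improve unilaterally. -/
def NashEq {n : ℕ} {C : Type} [DecidableEq C] (A : Fin n → Finset C)
    (p : (Fin n → C) → Fin n → ℕ) (s : Fin n → C) : Prop :=
  ∀ i, ∀ c ∈ A i, p (Function.update s i c) i ≤ p s i

/-- A single-player profitable deviation: exactly player `i` changes his
strategy and strictly improves. -/
def SingleStep {n : ℕ} {C : Type} (p : (Fin n → C) → Fin n → ℕ)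
    (s s' : Fin n → C) : Prop :=
  ∃ i, (∀ j, j ≠ i → s j = s' j) ∧ s i ≠ s' i ∧ p s i < p s' i

open Fin.NatCast Fin.CommRing

/-- In a coordination game with bonuses on a simple directed cycle with `n`
nodes, every Nash equilibrium is a `k`-equilibrium for every
`k ∈ {1, …, n-1}`: no coalition of at most `n - 1` players has a profitable
deviation from a Nash equilibrium. -/
theorem cycle_nash_is_k_equilibrium {n : ℕ} [NeZero n] (hn : 2 ≤ n)
    {C : Type} [DecidableEq C]
    (A : Fin n → Finset C) (hA : ∀ i, (A i).Nonempty)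
    (β : Fin n → C → ℕ)
    (s : Fin n → C) (hs : Valid A s) (hnash : NashEq A (cycPayoff β) s)
    (s' : Fin n → C) (hs' : Valid A s')
    (hsize : (univ.filter (fun i => s i ≠ s' i)).card ≤ n - 1) :
    ¬ ProfDev (cycPayoff β) s s' := by
  rintro ⟨hne, himp⟩
  -- The coalition is a proper nonempty subset, so it has a "boundary" member
  -- `i` with `s (i-1) = s' (i-1)`.
  have hKne : ∃ k : Fin n, s k ≠ s' k := by
    by_contra h
    push_neg at h
    exact hne (funext h)
  -- There is a node outside the coalition.
  have hj : ∃ j : Fin n, s j = s' j := by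
    by_contra h
    push_neg at h
    have : (univ.filter (fun i => s i ≠ s' i)) = univ := by
      ext i; simp [h i]
    rw [this, card_univ, Fintype.card_fin] at hsize
    omega
  obtain ⟨j, hj⟩ := hj
  obtain ⟨k, hk⟩ := hKne
  have hP : ∃ m : ℕ, s (j + (m : Fin n)) ≠ s' (j + (m : Fin n)) := by
    refine ⟨((k - j : Fin n) : ℕ), ?_⟩
    simpa [Fin.cast_val_eq_self] using hk
  classical
  obtain ⟨m, hm, hmin⟩ : ∃ m : ℕ, s (j + (m : Fin n)) ≠ s' (j + (m : Fin n)) ∧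
      ∀ l < m, s (j + (l : Fin n)) = s' (j + (l : Fin n)) :=
    ⟨Nat.find hP, Nat.find_spec hP, fun l hl => not_not.mp (Nat.find_min hP hl)⟩
  have hm0 : m ≠ 0 := by
    intro h
    apply hm
    simp only [h, Nat.cast_zero, add_zero]
    exact hj
  have hprev : s (j + ((m - 1 : ℕ) : Fin n)) = s' (j + ((m - 1 : ℕ) : Fin n)) :=
    hmin (m - 1) (by omega)
  set i : Fin n := j + (m : Fin n) with hi
  have hcast : ((m - 1 : ℕ) : Fin n) = (m : Fin n) - 1 := by
    have : 1 ≤ m := by omega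
    push_cast [this]
    ring
  have hpred : s (i - 1) = s' (i - 1) := by
    have : i - 1 = j + ((m - 1 : ℕ) : Fin n) := by
      rw [hcast]; ring
    rw [this]; exact hprev
  -- `i - 1 ≠ i` since `n ≥ 2`.
  have hone : (1 : Fin n) ≠ 0 := by
    rw [Ne, Fin.one_eq_zero_iff]
    omega
  have hii : i - 1 ≠ i := by
    intro h
    have : (1 : Fin n) = 0 := by
      have := sub_eq_self.mp h
      simpa [neg_eq_zero] using this
    exact hone this
  -- Now player `i` alone could deviate to `s' i`, contradicting Nash.
  have hlt := himp i hm
  have hn2 := hnash i (s' i) (hs' i)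
  have hupd : cycPayoff β (Function.update s i (s' i)) i = cycPayoff β s' i := by
    unfold cycPayoff
    rw [Function.update_self, Function.update_of_ne hii, hpred]
  rw [hupd] at hn2
  exact absurd hlt (not_lt.mpr hn2)
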